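/- Let d ≤ n and let σ_{d,n} ∈ ℂ[x_1,…,x_n] be the elementary symmetric polynomial of degree d. For each r with 0 ≤ r ≤ d, the Hilbert function of S/(σ_{d,n})^⊥ at r equals C(n,r) if r ≤ ⌊d/2⌋ and C(n,d-r) if r > ⌊d/2⌋, where (σ_{d,n})^⊥ is the apolar ideal in the ring S of constant-coefficient differential operators. -/

import Mathlib

open MvPolynomial Finset

/-- Differentiation of `F` by the monomial differential operator
`∂^{m} = ∏_i (∂/∂x_i)^{m i}`. -/
noncomputable def derivMon {n : ℕ} (m : Fin n →₀ ℕ) (F : MvPolynomial (Fin n) ℂ) :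
    MvPolynomial (Fin n) ℂ :=
  (List.finRange n).foldl (fun G i => (⇑(pderiv i))^[m i] G) F

namespace ApolarAux

variable {n : ℕ}

/-! ### Indicator finsupp of a finset -/

noncomputable def ind (S : Finset (Fin n)) : Fin n →₀ ℕ := ∑ i ∈ S, Finsupp.single i 1

lemma ind_apply (S : Finset (Fin n)) (i : Fin n) :
    ind S i = if i ∈ S then 1 else 0 := by
  classical
  classical
  simp only [ind, Finsupp.finset_sum_apply, Finsupp.single_apply]
  by_cases h : i ∈ S
  · rw [Finset.sum_eq_single i (fun j _ hj => by simp [hj]) (fun hi => absurd h hi)]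
    simp [h]
  · rw [Finset.sum_eq_zero (fun j hj => by
      have : j ≠ i := fun e => h (e ▸ hj)
      simp [this])]
    simp [h]

lemma ind_le_one (S : Finset (Fin n)) (i : Fin n) : ind S i ≤ 1 := by
  rw [ind_apply]; split <;> simp

lemma ind_inj {S T : Finset (Fin n)} (h : ind S = ind T) : S = T := by
  ext i
  have := DFunLike.congr_fun h i
  simp only [ind_apply] at this
  by_cases hS : i ∈ S <;> by_cases hT : i ∈ T <;> simp_all

lemma ind_sub {S T : Finset (Fin n)} (h : T ⊆ S) : ind S - ind T = ind (S \ T) := by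
  ext i
  simp only [Finsupp.coe_tsub, Pi.sub_apply, ind_apply, Finset.mem_sdiff]
  by_cases hT : i ∈ T
  · simp [hT, h hT]
  · by_cases hS : i ∈ S <;> simp [hS, hT]

lemma sum_ind (S : Finset (Fin n)) : (∑ i, ind S i) = S.card := by
  simp [ind_apply]

/-! ### Iterated partial derivatives of squarefree monomials -/

lemma iterate_pderiv_zero (i : Fin n) (k : ℕ) :
    (⇑(pderiv (R := ℂ) i))^[k] 0 = 0 := by
  induction k with
  | zero => rfl
  | succ k ih => rw [Function.iterate_succ_apply, map_zero, ih]

lemma iterate_pderiv_monomial {u : Fin n →₀ ℕ} (i : Fin n) (hu : u i ≤ 1) (k : ℕ) :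
    (⇑(pderiv (R := ℂ) i))^[k] (monomial u 1) =
      if k ≤ u i then monomial (u - Finsupp.single i k) 1 else 0 := by
  match k with
  | 0 => simp
  | 1 =>
    rw [Function.iterate_one, pderiv_monomial]
    rcases Nat.le_one_iff_eq_zero_or_eq_one.mp hu with h | h
    · simp [h]
    · simp [h]
  | (k+2) =>
    rw [Function.iterate_succ_apply, pderiv_monomial]
    rcases Nat.le_one_iff_eq_zero_or_eq_one.mp hu with h | h
    · rw [h]; simp only [Nat.cast_zero, mul_zero, map_zero, iterate_pderiv_zero]
      rw [if_neg (by omega)]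
    · have h2 : ((u - Finsupp.single i 1 : Fin n →₀ ℕ)) i = 0 := by
        rw [Finsupp.tsub_apply, h, Finsupp.single_eq_same]
      rw [h, Nat.cast_one, mul_one]
      rw [iterate_pderiv_monomial i (h2 ▸ Nat.zero_le 1) (k+1)]
      rw [if_neg (by omega), if_neg (by omega)]

lemma foldl_pderiv (m : Fin n →₀ ℕ) (L : List (Fin n)) (hL : L.Nodup)
    (u : Fin n →₀ ℕ) (hu : ∀ i, u i ≤ 1) :
    L.foldl (fun G i => (⇑(pderiv (R := ℂ) i))^[m i] G) (monomial u 1) =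
      if ∀ i ∈ L, m i ≤ u i then
        monomial (u - (L.map (fun i => Finsupp.single i (m i))).sum) 1 else 0 := by
  induction L generalizing u with
  | nil => simp
  | cons i L ih =>
    have hnd : L.Nodup := (List.nodup_cons.mp hL).2
    have hiL : i ∉ L := (List.nodup_cons.mp hL).1
    rw [List.foldl_cons, iterate_pderiv_monomial i (hu i)]
    by_cases hmi : m i ≤ u i
    · rw [if_pos hmi]
      have hu' : ∀ j, (u - Finsupp.single i (m i)) j ≤ 1 := by
        intro j
        simp only [Finsupp.coe_tsub, Pi.sub_apply]
        exact le_trans (Nat.sub_le _ _) (hu j)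
      rw [ih hnd _ hu']
      have hcond : (∀ j ∈ L, m j ≤ (u - Finsupp.single i (m i)) j) ↔ (∀ j ∈ L, m j ≤ u j) := by
        constructor <;> intro h j hj <;> have hji : j ≠ i := fun e => hiL (e ▸ hj) <;>
          have := h j hj <;>
          simpa [Finsupp.coe_tsub, Finsupp.single_apply, hji.symm] using this
      by_cases hall : ∀ j ∈ L, m j ≤ u j
      · rw [if_pos (hcond.mpr hall), if_pos (by
          intro j hj
          rcases List.mem_cons.mp hj with rfl | hj
          · exact hmi
          · exact hall j hj)]
        congr 1
        rw [List.map_cons, List.sum_cons, ← tsub_tsub]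
      · rw [if_neg (fun h => hall (hcond.mp h)), if_neg (by
          intro h
          exact hall (fun j hj => h j (List.mem_cons_of_mem _ hj)))]
    · rw [if_neg hmi, if_neg (fun h => hmi (h i (List.mem_cons_self)))]
      clear ih
      induction L with
      | nil => simp
      | cons a L ihL =>
        rw [List.foldl_cons, iterate_pderiv_zero]
        exact ihL (by simp_all) (by simp_all) (by simp_all)

/-! ### derivMon on esymm -/

lemma iterate_pderiv_sum {ι : Type*} (i : Fin n) (k : ℕ) (s : Finset ι)
    (f : ι → MvPolynomial (Fin n) ℂ) :
    (⇑(pderiv (R := ℂ) i))^[k] (∑ x ∈ s, f x) = ∑ x ∈ s, (⇑(pderiv (R := ℂ) i))^[k] (f x) := by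
  induction k with
  | zero => simp
  | succ k ihk =>
    rw [Function.iterate_succ_apply', ihk, map_sum]
    simp only [Function.iterate_succ_apply']

lemma derivMon_sum {ι : Type*} (m : Fin n →₀ ℕ) (s : Finset ι) (f : ι → MvPolynomial (Fin n) ℂ) :
    derivMon m (∑ x ∈ s, f x) = ∑ x ∈ s, derivMon m (f x) := by
  unfold derivMon
  induction (List.finRange n) generalizing f with
  | nil => simp
  | cons i L ih =>
    simp only [List.foldl_cons]
    rw [iterate_pderiv_sum]
    exact ih _

lemma derivMon_monomial (m : Fin n →₀ ℕ) (u : Fin n →₀ ℕ) (hu : ∀ i, u i ≤ 1) :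
    derivMon m (monomial u 1) =
      if ∀ i, m i ≤ u i then monomial (u - m) 1 else 0 := by
  unfold derivMon
  rw [foldl_pderiv m _ (List.nodup_finRange n) u hu]
  have h1 : (∀ i ∈ List.finRange n, m i ≤ u i) ↔ ∀ i, m i ≤ u i := by
    simp [List.mem_finRange]
  have h2 : ((List.finRange n).map (fun i => Finsupp.single i (m i))).sum = m := by
    rw [← Fin.sum_univ_def]
    ext j
    rw [Finsupp.finset_sum_apply]
    simp [Finsupp.single_apply]
  rw [h2]
  by_cases h : ∀ i, m i ≤ u i
  · rw [if_pos (h1.mpr h), if_pos h]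
  · rw [if_neg (fun hh => h (h1.mp hh)), if_neg h]

lemma ind_le_iff {S T : Finset (Fin n)} : (∀ i, ind T i ≤ ind S i) ↔ T ⊆ S := by
  constructor
  · intro h i hi
    have := h i
    rw [ind_apply, ind_apply, if_pos hi] at this
    by_contra hS
    rw [if_neg hS] at this
    omega
  · intro h i
    rw [ind_apply, ind_apply]
    by_cases hi : i ∈ T
    · rw [if_pos hi, if_pos (h hi)]
    · simp [hi]

lemma derivMon_ind_esymm {d r : ℕ} (T : Finset (Fin n)) (hT : T.card = r) (hrd : r ≤ d) :
    derivMon (ind T) (esymm (Fin n) ℂ d) =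
      ∑ U ∈ powersetCard (d - r) Tᶜ, monomial (ind U) (1 : ℂ) := by
  classical
  rw [esymm_eq_sum_monomial, derivMon_sum]
  have key : ∀ S ∈ powersetCard d (univ : Finset (Fin n)),
      derivMon (ind T) (monomial (∑ i ∈ S, Finsupp.single i 1) (1:ℂ)) =
        if T ⊆ S then monomial (ind (S \ T)) 1 else 0 := by
    intro S _
    rw [show (∑ i ∈ S, Finsupp.single i 1) = ind S from rfl]
    rw [derivMon_monomial _ _ (ind_le_one S)]
    by_cases h : T ⊆ S
    · rw [if_pos (ind_le_iff.mpr h), if_pos h, ind_sub h]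
    · rw [if_neg (fun hh => h (ind_le_iff.mp hh)), if_neg h]
  rw [Finset.sum_congr rfl key, ← Finset.sum_filter]
  refine Finset.sum_nbij' (fun S => S \ T) (fun U => U ∪ T) ?_ ?_ ?_ ?_ ?_
  · intro S hS
    simp only [Finset.mem_filter, Finset.mem_powersetCard] at hS
    rw [Finset.mem_powersetCard]
    exact ⟨fun i hi => by
      rw [Finset.mem_compl]
      exact (Finset.mem_sdiff.mp hi).2, by
      rw [Finset.card_sdiff_of_subset hS.2, hS.1.2, hT]⟩
  · intro U hU
    rw [Finset.mem_powersetCard] at hU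
    have hdisj : Disjoint U T := Finset.disjoint_left.mpr
      (fun i hi => Finset.mem_compl.mp (hU.1 hi))
    simp only [Finset.mem_filter, Finset.mem_powersetCard]
    exact ⟨⟨Finset.subset_univ _, by rw [Finset.card_union_of_disjoint hdisj, hU.2, hT]; omega⟩,
      Finset.subset_union_right⟩
  · intro S hS
    simp only [Finset.mem_filter] at hS
    rw [Finset.sdiff_union_of_subset hS.2]
  · intro U hU
    rw [Finset.mem_powersetCard] at hU
    have hdisj : Disjoint U T := Finset.disjoint_left.mpr
      (fun i hi => Finset.mem_compl.mp (hU.1 hi))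
    rw [Finset.union_sdiff_right, Finset.sdiff_eq_self_of_disjoint hdisj]
  · intro S _
    rfl

lemma derivMon_esymm_of_two_le {d : ℕ} (m : Fin n →₀ ℕ) (i : Fin n) (h2 : 2 ≤ m i) :
    derivMon m (esymm (Fin n) ℂ d) = 0 := by
  rw [esymm_eq_sum_monomial, derivMon_sum]
  refine Finset.sum_eq_zero fun S _ => ?_
  rw [show (∑ i ∈ S, Finsupp.single i 1) = ind S from rfl,
    derivMon_monomial _ _ (ind_le_one S), if_neg]
  intro h
  have ha := h i
  have hb := ind_le_one S i
  omega

lemma squarefree_eq_ind (m : Fin n →₀ ℕ) (h : ∀ i, m i ≤ 1) : m = ind m.support := by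
  ext i
  rw [ind_apply]
  by_cases hi : i ∈ m.support
  · rw [if_pos hi]
    have h1 := Finsupp.mem_support_iff.mp hi
    have h2 := h i
    omega
  · rw [if_neg hi]
    exact Finsupp.notMem_support_iff.mp hi

lemma card_support_eq (m : Fin n →₀ ℕ) (h : ∀ i, m i ≤ 1) :
    m.support.card = ∑ i, m i := by
  have e1 : ∑ i, m i = ∑ i ∈ m.support, m i :=
    (Finset.sum_subset (Finset.subset_univ _)
      (fun i _ hi => Finsupp.notMem_support_iff.mp hi)).symm
  rw [e1, Finset.card_eq_sum_ones]
  refine Finset.sum_congr rfl fun i hi => ?_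
  have h1 := Finsupp.mem_support_iff.mp hi
  have h2 := h i
  omega

/-! ### Up and down operators on the Boolean lattice -/

noncomputable def upE : Module.End ℂ (Finset (Fin n) → ℂ) where
  toFun c S := ∑ i ∈ S, c (S.erase i)
  map_add' c d := by funext S; simp [Finset.sum_add_distrib]
  map_smul' a c := by funext S; simp [Finset.mul_sum]

noncomputable def downE : Module.End ℂ (Finset (Fin n) → ℂ) where
  toFun c S := ∑ i ∈ Sᶜ, c (insert i S)
  map_add' c d := by funext S; simp [Finset.sum_add_distrib]
  map_smul' a c := by funext S; simp [Finset.mul_sum]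

def lvl (k : ℕ) (c : Finset (Fin n) → ℂ) : Prop := ∀ S, S.card ≠ k → c S = 0

lemma upE_apply (c : Finset (Fin n) → ℂ) (S : Finset (Fin n)) :
    upE c S = ∑ i ∈ S, c (S.erase i) := rfl

lemma downE_apply (c : Finset (Fin n) → ℂ) (S : Finset (Fin n)) :
    downE c S = ∑ i ∈ Sᶜ, c (insert i S) := rfl

lemma lvl_up {k : ℕ} {c : Finset (Fin n) → ℂ} (h : lvl k c) : lvl (k + 1) (upE c) := by
  intro S hS
  rw [upE_apply]
  refine Finset.sum_eq_zero fun i hi => h _ ?_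
  rw [Finset.card_erase_of_mem hi]
  have := Finset.card_pos.mpr ⟨i, hi⟩
  omega

lemma lvl_up_pow {k : ℕ} {c : Finset (Fin n) → ℂ} (h : lvl k c) (m : ℕ) :
    lvl (k + m) ((upE ^ m) c) := by
  induction m with
  | zero => simpa using h
  | succ m ih =>
    rw [pow_succ']
    have := lvl_up (k := k + m) (c := (upE ^ m) c) ih
    simpa [Nat.add_assoc, Module.End.mul_apply] using this

lemma lvl_down {k : ℕ} {c : Finset (Fin n) → ℂ} (h : lvl (k + 1) c) : lvl k (downE c) := by
  intro S hS
  rw [downE_apply]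
  refine Finset.sum_eq_zero fun i hi => h _ ?_
  rw [Finset.card_insert_of_notMem (Finset.mem_compl.mp hi)]
  omega

lemma down_lvl_zero {c : Finset (Fin n) → ℂ} (h : lvl 0 c) : downE c = 0 := by
  funext S
  rw [downE_apply]
  exact Finset.sum_eq_zero fun i hi => h _ (by simp [Finset.card_insert_of_notMem
    (Finset.mem_compl.mp hi)])

lemma comm_down_up {k : ℕ} {c : Finset (Fin n) → ℂ} (h : lvl k c) :
    downE (upE c) = upE (downE c) + ((n : ℂ) - 2 * k) • c := by
  funext S
  by_cases hS : S.card = k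
  · have hcompl : ∀ i ∈ Sᶜ, upE c (insert i S) =
        c S + ∑ j ∈ S, c (insert i (S.erase j)) := by
      intro i hi
      have hiS : i ∉ S := Finset.mem_compl.mp hi
      rw [upE_apply, Finset.sum_insert hiS, Finset.erase_insert hiS]
      congr 1
      refine Finset.sum_congr rfl fun j hj => ?_
      rw [Finset.erase_insert_of_ne (fun e : i = j => hiS (by rw [e]; exact hj))]
    have hpart : ∀ j ∈ S, downE c (S.erase j) =
        c S + ∑ i ∈ Sᶜ, c (insert i (S.erase j)) := by
      intro j hj
      rw [downE_apply, show (S.erase j)ᶜ = insert j Sᶜ by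
        rw [Finset.compl_erase], Finset.sum_insert (by simp [hj]),
        Finset.insert_erase hj]
    have hkn : k ≤ n := by
      rw [← hS]
      simpa using Finset.card_le_univ S
    have L : downE (upE c) S =
        ((n - k : ℕ) : ℂ) * c S + ∑ i ∈ Sᶜ, ∑ j ∈ S, c (insert i (S.erase j)) := by
      rw [downE_apply, Finset.sum_congr rfl hcompl, Finset.sum_add_distrib,
        Finset.sum_const, Finset.card_compl, hS, Fintype.card_fin]
      simp [nsmul_eq_mul]
    have R : upE (downE c) S =
        (k : ℂ) * c S + ∑ j ∈ S, ∑ i ∈ Sᶜ, c (insert i (S.erase j)) := by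
      rw [upE_apply, Finset.sum_congr rfl hpart, Finset.sum_add_distrib,
        Finset.sum_const, hS]
      simp [nsmul_eq_mul]
    simp only [Pi.add_apply, Pi.smul_apply, smul_eq_mul]
    rw [L, R, Finset.sum_comm]
    push_cast [Nat.cast_sub hkn]
    ring
  · have h1 : downE (upE c) S = 0 := by
      rw [downE_apply]
      refine Finset.sum_eq_zero fun i hi => lvl_up h _ ?_
      rw [Finset.card_insert_of_notMem (Finset.mem_compl.mp hi)]
      omega
    have h2 : upE (downE c) S = 0 := by
      rw [upE_apply]
      refine Finset.sum_eq_zero fun j hj => ?_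
      rw [downE_apply]
      refine Finset.sum_eq_zero fun i hi => h _ ?_
      rw [Finset.card_insert_of_notMem (Finset.mem_compl.mp hi),
        Finset.card_erase_of_mem hj]
      have := Finset.card_pos.mpr ⟨j, hj⟩
      omega
    rw [h1]
    simp [h2, h S hS]

lemma comm_down_up_pow (m : ℕ) {k : ℕ} {c : Finset (Fin n) → ℂ} (h : lvl k c) :
    downE ((upE ^ (m + 1)) c) = (upE ^ (m + 1)) (downE c)
      + ((((m : ℂ) + 1) * ((n : ℂ) - 2 * k - m)) • ((upE ^ m) c)) := by
  induction m generalizing k c with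
  | zero =>
    simp only [zero_add, pow_one, pow_zero, Module.End.one_apply, Nat.cast_zero]
    rw [comm_down_up h]
    norm_num
  | succ m ih =>
    have hc' : lvl (k + 1) (upE c) := lvl_up h
    have e1 : (upE ^ (m + 2)) c = (upE ^ (m + 1)) (upE c) := by
      rw [pow_succ, Module.End.mul_apply]
    have e2 : (upE ^ (m + 1)) (upE (downE c)) = (upE ^ (m + 2)) (downE c) :=
      (show (upE ^ (m + 2)) (downE c) = (upE ^ (m + 1)) (upE (downE c)) by
        rw [pow_succ, Module.End.mul_apply]).symm
    have e3 : (upE ^ m) (upE c) = (upE ^ (m + 1)) c :=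
      (show (upE ^ (m + 1)) c = (upE ^ m) (upE c) by
        rw [pow_succ, Module.End.mul_apply]).symm
    rw [e1, ih hc', comm_down_up h, map_add, map_smul, e2, e3]
    rw [add_assoc, ← add_smul]
    congr 1
    push_cast
    ring

lemma upE_inner (k : ℕ)
    (HD : ∀ (m : ℕ) (c : Finset (Fin n) → ℂ), 2 * k + m ≤ n → lvl k c →
      (upE ^ (m + 2)) (downE c) = 0 → downE c = 0) :
    ∀ (m : ℕ) (c : Finset (Fin n) → ℂ), 2 * k + m ≤ n → lvl k c →
      (upE ^ m) c = 0 → c = 0 := by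
  intro m
  induction m with
  | zero => intro c _ _ h0; simpa using h0
  | succ m ihm =>
    intro c hmn h hc0
    have hup2 : (upE ^ (m + 2)) c = 0 := by
      rw [pow_succ', Module.End.mul_apply, hc0, map_zero]
    have key2 := comm_down_up_pow (m + 1) h
    simp only [hup2, hc0, map_zero, smul_zero, add_zero] at key2
    have hdown : downE c = 0 := HD m c (by omega) h key2.symm
    have key := comm_down_up_pow m h
    simp only [hc0, hdown, map_zero, zero_add] at key
    have hcoef : (((m : ℂ) + 1) * ((n : ℂ) - 2 * k - m)) ≠ 0 := by
      have h1 : ((m : ℂ) + 1) ≠ 0 := Nat.cast_add_one_ne_zero m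
      have h2 : ((n : ℂ) - 2 * k - m) ≠ 0 := by
        intro he
        have hc : ((2 * k + m : ℕ) : ℂ) = ((n : ℕ) : ℂ) := by
          push_cast
          linear_combination -he
        have : (2 * k + m : ℕ) = n := Nat.cast_injective hc
        omega
      exact mul_ne_zero h1 h2
    have hz := (smul_eq_zero.mp key.symm).resolve_left hcoef
    exact ihm c (by omega) h hz

lemma upE_pow_inj : ∀ (k m : ℕ) (c : Finset (Fin n) → ℂ), 2 * k + m ≤ n → lvl k c →
    (upE ^ m) c = 0 → c = 0 := by
  intro k
  induction k with
  | zero => exact upE_inner 0 (fun m' c' _ hl' _ => down_lvl_zero hl')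
  | succ k ihk =>
    refine upE_inner (k + 1) (fun m' c' hm' hl' hup => ?_)
    exact ihk (m' + 2) (downE c') (by omega) (lvl_down hl') hup

lemma upE_pow_apply {a : ℕ} {c : Finset (Fin n) → ℂ} (h : lvl a c) (j : ℕ)
    (B : Finset (Fin n)) (hB : B.card = a + j) :
    (upE ^ j) c B = (j.factorial : ℂ) * ∑ T ∈ Finset.powersetCard a B, c T := by
  induction j generalizing B with
  | zero =>
    rw [show a = B.card by omega, Finset.powersetCard_self]
    simp
  | succ j ih =>
    rw [pow_succ', Module.End.mul_apply, upE_apply]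
    have hstep : ∀ i ∈ B, (upE ^ j) c (B.erase i)
        = (j.factorial : ℂ) * ∑ T ∈ Finset.powersetCard a (B.erase i), c T := by
      intro i hi
      exact ih _ (by rw [Finset.card_erase_of_mem hi]; omega)
    rw [Finset.sum_congr rfl hstep, ← Finset.mul_sum]
    rw [Finset.sum_comm' (s' := fun T => B \ T) (t' := Finset.powersetCard a B)
      (f := fun _ T => c T) (by
        intro i T
        simp only [Finset.mem_powersetCard, Finset.mem_sdiff, Finset.subset_erase]
        constructor
        · rintro ⟨hi, ⟨hTB, hiT⟩, hca⟩
          exact ⟨⟨hi, hiT⟩, hTB, hca⟩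
        · rintro ⟨⟨hi, hiT⟩, hTB, hca⟩
          exact ⟨hi, ⟨hTB, hiT⟩, hca⟩)]
    have hconst : ∀ T ∈ Finset.powersetCard a B, (∑ _i ∈ B \ T, c T) = (j + 1 : ℂ) • c T := by
      intro T hT
      rw [Finset.sum_const]
      rw [Finset.mem_powersetCard] at hT
      rw [Finset.card_sdiff_of_subset hT.1, hB, hT.2]
      rw [show a + (j + 1) - a = j + 1 by omega]
      push_cast
      simp
    rw [Finset.sum_congr rfl hconst, ← Finset.smul_sum, Nat.factorial_succ]
    push_cast
    rw [smul_eq_mul]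
    ring

lemma disjoint_rows_indep {a b : ℕ} (hab : a ≤ b) (hn : a + b ≤ n)
    (c : Finset (Fin n) → ℂ) (hc : lvl a c)
    (h : ∀ U : Finset (Fin n), U.card = b →
      (∑ T ∈ Finset.powersetCard a (univ : Finset (Fin n)),
        (if Disjoint T U then c T else 0)) = 0) :
    c = 0 := by
  apply upE_pow_inj a (n - a - b) c (by omega) hc
  funext B
  rw [Pi.zero_apply]
  by_cases hB : B.card = a + (n - a - b)
  · rw [upE_pow_apply hc _ _ hB]
    have hBc : Bᶜ.card = b := by
      rw [Finset.card_compl, hB, Fintype.card_fin]; omega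
    have hU := h Bᶜ hBc
    have e : ∑ T ∈ Finset.powersetCard a B, c T
        = ∑ T ∈ Finset.powersetCard a (univ : Finset (Fin n)),
            (if Disjoint T Bᶜ then c T else 0) := by
      rw [← Finset.sum_filter]
      apply Finset.sum_congr ?_ (fun _ _ => rfl)
      ext T
      simp only [Finset.mem_powersetCard, Finset.mem_filter, Finset.subset_univ, true_and,
        disjoint_compl_right_iff, Finset.le_iff_subset]
      tauto
    rw [e, hU, mul_zero]
  · exact (lvl_up_pow hc _) B hB

/-! ### Transfer to polynomials and matrix rank -/

noncomputable def gmap (b : ℕ) :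
    ({U : Finset (Fin n) // U ∈ powersetCard b (univ : Finset (Fin n))} → ℂ)
      →ₗ[ℂ] MvPolynomial (Fin n) ℂ where
  toFun c := ∑ U, c U • monomial (ind (U : Finset (Fin n))) (1 : ℂ)
  map_add' c d := by simp [add_smul, Finset.sum_add_distrib]
  map_smul' a c := by simp [smul_smul, Finset.smul_sum]

lemma gmap_inj (b : ℕ) : Function.Injective (gmap (n := n) b) := by
  rw [injective_iff_map_eq_zero]
  intro c hc
  funext U0
  have := congrArg (MvPolynomial.coeff (ind (U0 : Finset (Fin n)))) hc
  rw [show (gmap b) c = ∑ U, c U • monomial (ind (U : Finset (Fin n))) (1 : ℂ) from rfl] at this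
  rw [MvPolynomial.coeff_sum] at this
  simp only [MvPolynomial.coeff_smul, MvPolynomial.coeff_monomial, MvPolynomial.coeff_zero,
    smul_eq_mul] at this
  rw [Finset.sum_eq_single U0 (fun U _ hU => by
      rw [if_neg (fun he => hU (Subtype.ext (ind_inj he))), mul_zero])
    (fun hU => absurd (Finset.mem_univ U0) hU)] at this
  simpa using this

noncomputable def dmat (a b : ℕ) :
    Matrix {T : Finset (Fin n) // T ∈ powersetCard a (univ : Finset (Fin n))}
      {U : Finset (Fin n) // U ∈ powersetCard b (univ : Finset (Fin n))} ℂ :=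
  Matrix.of fun T U => if Disjoint (T : Finset (Fin n)) (U : Finset (Fin n)) then 1 else 0

lemma dmat_transpose (a b : ℕ) : (dmat (n := n) a b).transpose = dmat (n := n) b a := by
  ext U T
  simp only [Matrix.transpose_apply, dmat, Matrix.of_apply]
  congr 1
  exact propext disjoint_comm

lemma dmat_indep {a b : ℕ} (hab : a ≤ b) (hn : a + b ≤ n) :
    LinearIndependent ℂ (dmat (n := n) a b) := by
  refine Fintype.linearIndependent_iff.mpr ?_
  intro gc hgc T0
  have hzero : (fun T => if h : T ∈ powersetCard a (univ : Finset (Fin n)) then gc ⟨T, h⟩ else 0)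
      = (0 : Finset (Fin n) → ℂ) := by
    refine disjoint_rows_indep hab hn _ (fun S hS => ?_) (fun U hU => ?_)
    · exact dif_neg (fun hmem => hS (Finset.mem_powersetCard_univ.mp hmem))
    · have hUmem : U ∈ powersetCard b (univ : Finset (Fin n)) :=
        Finset.mem_powersetCard_univ.mpr hU
      have h0 := congrFun hgc ⟨U, hUmem⟩
      simp only [Finset.sum_apply, Pi.smul_apply, Pi.zero_apply, smul_eq_mul] at h0
      have e : (∑ T ∈ powersetCard a (univ : Finset (Fin n)),
          if Disjoint T U then
            (if h : T ∈ powersetCard a (univ : Finset (Fin n)) then gc ⟨T, h⟩ else 0) else 0)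
          = ∑ T : {T : Finset (Fin n) // T ∈ powersetCard a (univ : Finset (Fin n))},
              gc T * dmat a b T ⟨U, hUmem⟩ := by
        rw [Finset.sum_subtype (powersetCard a (univ : Finset (Fin n))) (fun T => Iff.rfl)]
        refine Finset.sum_congr rfl fun T _ => ?_
        rw [dif_pos T.2]
        show (if Disjoint (T : Finset (Fin n)) U then gc T else 0)
          = gc T * (if Disjoint (T : Finset (Fin n)) U then 1 else 0)
        split <;> simp
      rw [e]
      exact h0
  have h1 := congrFun hzero (T0 : Finset (Fin n))
  simpa [T0.2] using h1

lemma rank_dmat_of_le {a b : ℕ} (hab : a ≤ b) (hn : a + b ≤ n) :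
    (dmat (n := n) a b).rank = n.choose a := by
  rw [show (dmat (n := n) a b).rank = _ from (dmat_indep hab hn).rank_matrix, Fintype.card_coe, Finset.card_powersetCard,
    Finset.card_univ, Fintype.card_fin]

lemma gmap_dmat (a b : ℕ)
    (T : {T : Finset (Fin n) // T ∈ powersetCard a (univ : Finset (Fin n))}) :
    gmap b (dmat (n := n) a b T) =
      ∑ U ∈ powersetCard b ((T : Finset (Fin n)))ᶜ, monomial (ind U) (1 : ℂ) := by
  show (∑ U : {U : Finset (Fin n) // U ∈ powersetCard b (univ : Finset (Fin n))},
      dmat a b T U • monomial (ind (U : Finset (Fin n))) (1 : ℂ)) = _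
  simp only [dmat, Matrix.of_apply]
  rw [← Finset.sum_subtype (powersetCard b (univ : Finset (Fin n))) (fun U => Iff.rfl)
    (fun U => (if Disjoint (T : Finset (Fin n)) U then (1 : ℂ) else 0) • monomial (ind U) (1 : ℂ))]
  simp only [ite_smul, one_smul, zero_smul]
  rw [← Finset.sum_filter]
  apply Finset.sum_congr ?_ (fun _ _ => rfl)
  ext U
  simp only [Finset.mem_filter, Finset.mem_powersetCard, Finset.subset_univ, true_and]
  rw [← Finset.le_iff_subset, le_compl_iff_disjoint_left]
  tauto

lemma finrank_span_gmap_dmat (a b : ℕ) :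
    Module.finrank ℂ (Submodule.span ℂ
      (Set.range (fun T => gmap (n := n) b (dmat (n := n) a b T)))) =
      (dmat (n := n) a b).rank := by
  have himg : (Set.range fun T => gmap (n := n) b (dmat (n := n) a b T))
      = gmap (n := n) b '' (Set.range (dmat (n := n) a b)) := by
    exact Set.range_comp' _ _
  rw [himg, Submodule.span_image,
    ← LinearEquiv.finrank_eq (Submodule.equivMapOfInjective _ (gmap_inj b) _)]
  exact (Matrix.rank_eq_finrank_span_row _).symm

end ApolarAux

open ApolarAux in
/-- The Hilbert function of `S/(σ_{d,n})^⊥` in degree `r`, i.e. the rank of the `r`-th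
catalecticant of `σ_{d,n}` (the dimension of the space spanned by the `r`-th order partial
derivatives of `σ_{d,n}`), equals `C(n,r)` for `r ≤ ⌊d/2⌋` and `C(n,d-r)` for `r > ⌊d/2⌋`. -/
theorem hilbert_function_esymm_apolar (d n r : ℕ) (hd : d ≤ n) (hr : r ≤ d) :
    Module.finrank ℂ (Submodule.span ℂ
        {G : MvPolynomial (Fin n) ℂ | ∃ m : Fin n →₀ ℕ, (∑ i, m i) = r ∧
          G = derivMon m (esymm (Fin n) ℂ d)}) =
      if r ≤ d / 2 then n.choose r else n.choose (d - r) := by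
  classical
  have hspan : Submodule.span ℂ
      {G : MvPolynomial (Fin n) ℂ | ∃ m : Fin n →₀ ℕ, (∑ i, m i) = r ∧
        G = derivMon m (esymm (Fin n) ℂ d)}
      = Submodule.span ℂ
        (Set.range fun T => gmap (n := n) (d - r) (dmat (n := n) r (d - r) T)) := by
    apply le_antisymm <;> rw [Submodule.span_le]
    · rintro G ⟨m, hm, rfl⟩
      by_cases hsf : ∀ i, m i ≤ 1
      · have hcard : m.support.card = r := by rw [card_support_eq m hsf]; exact hm
        have hmem : m.support ∈ powersetCard r (univ : Finset (Fin n)) :=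
          Finset.mem_powersetCard_univ.mpr hcard
        have heq : derivMon m (esymm (Fin n) ℂ d)
            = gmap (d - r) (dmat (n := n) r (d - r) ⟨m.support, hmem⟩) := by
          rw [gmap_dmat]
          conv_lhs => rw [squarefree_eq_ind m hsf]
          exact derivMon_ind_esymm m.support hcard hr
        rw [heq]
        exact Submodule.subset_span (Set.mem_range_self _)
      · push_neg at hsf
        obtain ⟨i, hi⟩ := hsf
        rw [derivMon_esymm_of_two_le m i hi]
        exact Submodule.zero_mem _
    · rintro G ⟨T, rfl⟩
      refine Submodule.subset_span ⟨ind (T : Finset (Fin n)), ?_, ?_⟩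
      · rw [sum_ind]; exact Finset.mem_powersetCard_univ.mp T.2
      · show gmap (d - r) (dmat (n := n) r (d - r) T)
            = derivMon (ind (T : Finset (Fin n))) (esymm (Fin n) ℂ d)
        rw [gmap_dmat,
          derivMon_ind_esymm (T : Finset (Fin n)) (Finset.mem_powersetCard_univ.mp T.2) hr]
  rw [hspan, finrank_span_gmap_dmat r (d - r)]
  by_cases hcase : r ≤ d / 2
  · rw [if_pos hcase]
    exact rank_dmat_of_le (by omega) (by omega)
  · rw [if_neg hcase]
    rw [← Matrix.rank_transpose, dmat_transpose]
    exact rank_dmat_of_le (by omega) (by omega)
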